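/- arXiv:2502.02430 — 2 statements merged into one kernel-verified Lean document; each statement's English description precedes it below -/
import Mathlib

section
/- The function ψ is strictly monotonically increasing on [0, ∞). -/
open Real Finset

/-- Normalized residual of the `i`-th Taylor approximation of the exponential:
`R_i(x) = (exp x − ∑_{j=0}^{i} x^j/j!) / exp x`. -/
noncomputable def Rres (i : ℕ) (x : ℝ) : ℝ :=
  (Real.exp x - ∑ j ∈ Finset.range (i + 1), x ^ j / (Nat.factorial j : ℝ)) / Real.exp x

/-- Expected crawl-interval length `ψ(ι) = ∑_{i=0}^{⌊ι/β⌋} (1/γ)·R_i(γ(ι − iβ))`. -/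
noncomputable def psi (γ β : ℝ) (ι : ℝ) : ℝ :=
  ∑ i ∈ Finset.range (⌊ι / β⌋₊ + 1), (1 / γ) * Rres i (γ * (ι - (i : ℝ) * β))

lemma hasDerivAt_taylor (i : ℕ) (x : ℝ) :
    HasDerivAt (fun x : ℝ => ∑ j ∈ Finset.range (i + 1), x ^ j / (Nat.factorial j : ℝ))
      ((∑ j ∈ Finset.range (i + 1), x ^ j / (Nat.factorial j : ℝ)) - x ^ i / (Nat.factorial i : ℝ)) x := by
  induction i with
  | zero =>
      simp only [zero_add, Finset.sum_range_one, pow_zero, Nat.factorial_zero, Nat.cast_one,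
        div_one, sub_self]
      exact (hasDerivAt_const x (1 : ℝ))
  | succ n ih =>
      have h1 : HasDerivAt (fun x : ℝ => x ^ (n + 1) / (Nat.factorial (n + 1) : ℝ))
          (x ^ n / (Nat.factorial n : ℝ)) x := by
        have := (hasDerivAt_pow (n + 1) x).div_const ((Nat.factorial (n + 1) : ℝ))
        refine this.congr_deriv (Eq.symm ?_)
        rw [Nat.factorial_succ]
        push_cast
        field_simp
      have := ih.add h1
      have heq : (fun x : ℝ => ∑ j ∈ Finset.range (n + 2), x ^ j / (Nat.factorial j : ℝ)) =
          fun x : ℝ => (∑ j ∈ Finset.range (n + 1), x ^ j / (Nat.factorial j : ℝ)) +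
            x ^ (n + 1) / (Nat.factorial (n + 1) : ℝ) := by
        funext y
        rw [Finset.sum_range_succ]
      rw [heq]
      refine this.congr_deriv (Eq.symm ?_)
      rw [Finset.sum_range_succ]
      ring

lemma Rres_eq (i : ℕ) : Rres i = fun x : ℝ =>
    1 - (∑ j ∈ Finset.range (i + 1), x ^ j / (Nat.factorial j : ℝ)) * Real.exp (-x) := by
  funext x
  rw [Rres, Real.exp_neg]
  field_simp

lemma hasDerivAt_Rres (i : ℕ) (x : ℝ) :
    HasDerivAt (Rres i) (x ^ i / (Nat.factorial i : ℝ) * Real.exp (-x)) x := by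
  rw [Rres_eq]
  have hT := hasDerivAt_taylor i x
  have hE : HasDerivAt (fun x : ℝ => Real.exp (-x)) (-Real.exp (-x)) x := by
    have := (Real.hasDerivAt_exp (-x)).comp x ((hasDerivAt_id x).neg)
    refine this.congr_deriv (Eq.symm ?_)
    ring
  have := ((hT.mul hE)).const_sub 1
  refine this.congr_deriv (Eq.symm ?_)
  ring

lemma Rres_strictMonoOn (i : ℕ) : StrictMonoOn (Rres i) (Set.Ici (0 : ℝ)) := by
  apply strictMonoOn_of_deriv_pos (convex_Ici 0)
  · exact fun x _ => ((hasDerivAt_Rres i x).differentiableAt.continuousAt).continuousWithinAt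
  · intro x hx
    rw [interior_Ici] at hx
    have hx' : (0 : ℝ) < x := hx
    rw [(hasDerivAt_Rres i x).deriv]
    positivity

lemma Rres_zero (i : ℕ) : Rres i 0 = 0 := by
  rw [Rres]
  rw [Finset.sum_eq_single 0]
  · simp
  · intro j _ hj
    rw [zero_pow hj]
    simp
  · simp

lemma Rres_nonneg (i : ℕ) {x : ℝ} (hx : 0 ≤ x) : 0 ≤ Rres i x := by
  rcases eq_or_lt_of_le hx with h | h
  · rw [← h, Rres_zero]
  · have := (Rres_strictMonoOn i) (Set.self_mem_Ici) (Set.mem_Ici.mpr hx) h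
    rw [Rres_zero] at this
    exact this.le

/-- The function `ψ` is strictly monotonically increasing on `[0, ∞)`. -/
theorem stmt_5 (γ β : ℝ) (hγ : 0 < γ) (hβ : 0 < β) :
    StrictMonoOn (psi γ β) (Set.Ici (0 : ℝ)) := by
  intro a ha b hb hab
  have ha' : (0 : ℝ) ≤ a := ha
  have hb' : (0 : ℝ) ≤ b := hb
  have hfloor : ⌊a / β⌋₊ ≤ ⌊b / β⌋₊ :=
    Nat.floor_le_floor (by gcongr)
  have hle : ∀ (c : ℝ), 0 ≤ c → ∀ i : ℕ, i ≤ ⌊c / β⌋₊ → (i : ℝ) * β ≤ c := by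
    intro c hc i hi
    have h1 : (i : ℝ) ≤ ⌊c / β⌋₊ := Nat.cast_le.mpr hi
    have h2 : (⌊c / β⌋₊ : ℝ) ≤ c / β := Nat.floor_le (by positivity)
    have : (i : ℝ) ≤ c / β := h1.trans h2
    calc (i : ℝ) * β ≤ (c / β) * β := by gcongr
      _ = c := by field_simp
  calc psi γ β a
      < ∑ i ∈ Finset.range (⌊a / β⌋₊ + 1), (1 / γ) * Rres i (γ * (b - (i : ℝ) * β)) := by
        apply Finset.sum_lt_sum_of_nonempty Finset.nonempty_range_add_one
        intro i hi
        rw [Finset.mem_range] at hi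
        have hia : (i : ℝ) * β ≤ a := hle a ha' i (by omega)
        have h1 : γ * (a - (i : ℝ) * β) ∈ Set.Ici (0 : ℝ) := by
          simp only [Set.mem_Ici]; nlinarith
        have h2 : γ * (b - (i : ℝ) * β) ∈ Set.Ici (0 : ℝ) := by
          simp only [Set.mem_Ici]; nlinarith
        have h3 : γ * (a - (i : ℝ) * β) < γ * (b - (i : ℝ) * β) := by nlinarith
        have := (Rres_strictMonoOn i) h1 h2 h3
        have hγ' : (0 : ℝ) < 1 / γ := by positivity
        exact mul_lt_mul_of_pos_left this hγ'
    _ ≤ psi γ β b := by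
        apply Finset.sum_le_sum_of_subset_of_nonneg
        · exact Finset.range_subset_range.mpr (by omega)
        · intro i hi _
          rw [Finset.mem_range] at hi
          have hib : (i : ℝ) * β ≤ b := hle b hb' i (by omega)
          have : 0 ≤ Rres i (γ * (b - (i : ℝ) * β)) := Rres_nonneg i (by nlinarith)
          positivity
end

section
/- For every real ι > 0 such that ι/β is not an integer, both ψ and w are differentiable at ι, and their derivatives satisfy w'(ι) = exp(−αι)·ψ'(ι). -/
open Real Finset

/-- Expected cumulative freshness `w(ι) = ∑_{i=0}^{⌊ι/β⌋} (ν^i/(Δ+ν)^{i+1})·R_i((α+γ)(ι − iβ))`. -/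
noncomputable def wfun (α β γ ν Δ : ℝ) (ι : ℝ) : ℝ :=
  ∑ i ∈ Finset.range (⌊ι / β⌋₊ + 1),
    (ν ^ i / (Δ + ν) ^ (i + 1)) * Rres i ((α + γ) * (ι - (i : ℝ) * β))

lemma hasDerivAt_S (i : ℕ) (x : ℝ) :
    HasDerivAt (fun y => (∑ j ∈ Finset.range (i+1), y ^ j / (Nat.factorial j : ℝ)) * Real.exp (-y))
      (-(x ^ i / (Nat.factorial i : ℝ)) * Real.exp (-x)) x := by
  induction i with
  | zero =>
    have h : HasDerivAt (fun y : ℝ => Real.exp (-y)) (Real.exp (-x) * (-1)) x :=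
      (Real.hasDerivAt_exp (-x)).comp x ((hasDerivAt_id x).neg)
    simp only [Finset.range_one, Finset.sum_singleton, pow_zero, Nat.factorial_zero,
      Nat.cast_one, div_one, one_mul]
    simpa using h
  | succ i ih =>
    have hexp : HasDerivAt (fun y : ℝ => Real.exp (-y)) (Real.exp (-x) * (-1)) x :=
      (Real.hasDerivAt_exp (-x)).comp x ((hasDerivAt_id x).neg)
    have hterm : HasDerivAt (fun y : ℝ => y ^ (i+1) / (Nat.factorial (i+1) : ℝ) * Real.exp (-y))
        (((i+1 : ℕ) * x ^ i / (Nat.factorial (i+1) : ℝ)) * Real.exp (-x)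
          + x ^ (i+1) / (Nat.factorial (i+1) : ℝ) * (Real.exp (-x) * (-1))) x :=
      ((hasDerivAt_pow (i+1) x).div_const _).mul hexp
    have this1 := ih.add hterm
    have hf : (Nat.factorial (i+1) : ℝ) = (i+1) * (Nat.factorial i : ℝ) := by
      push_cast [Nat.factorial_succ]; ring
    have hne : (Nat.factorial i : ℝ) ≠ 0 := Nat.cast_ne_zero.2 (Nat.factorial_ne_zero i)
    have hd : -(x ^ (i+1) / (Nat.factorial (i+1) : ℝ)) * Real.exp (-x)
        = -(x ^ i / (Nat.factorial i : ℝ)) * Real.exp (-x) +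
          (((i+1 : ℕ) * x ^ i / (Nat.factorial (i+1) : ℝ)) * Real.exp (-x)
            + x ^ (i+1) / (Nat.factorial (i+1) : ℝ) * (Real.exp (-x) * (-1))) := by
      rw [hf]; push_cast; field_simp; ring
    simp only [Finset.sum_range_succ _ (i+1), add_mul, hd]
    exact this1

lemma hasDerivAt_Rres_comp (i : ℕ) (a c x : ℝ) :
    HasDerivAt (fun t => Rres i (a * (t - c)))
      ((a * (x - c)) ^ i / (Nat.factorial i : ℝ) * Real.exp (-(a * (x - c))) * (a * 1)) x :=
  by have := (hasDerivAt_Rres i (a * (x - c))).comp x (((hasDerivAt_id x).sub_const c).const_mul a); exact this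

/-- For every real `ι > 0` such that `ι/β` is not an integer, both `ψ` and `w` are differentiable
at `ι`, and their derivatives satisfy `w'(ι) = exp(−αι)·ψ'(ι)`. -/
theorem stmt_8 (α β γ ν Δ : ℝ) (hα : 0 < α) (hβ : 0 < β) (hγ : 0 < γ) (hν : 0 < ν)
    (hΔ : 0 < Δ) (hrates : α + γ = Δ + ν) (hnu : ν = γ * Real.exp (-(α * β)))
    (ι : ℝ) (hι : 0 < ι) (hnotint : ∀ k : ℤ, ι / β ≠ (k : ℝ)) :
    DifferentiableAt ℝ (psi γ β) ι ∧ DifferentiableAt ℝ (wfun α β γ ν Δ) ι ∧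
    deriv (wfun α β γ ν Δ) ι = Real.exp (-(α * ι)) * deriv (psi γ β) ι := by
  set n := ⌊ι / β⌋₊ with hn
  have hdivpos : 0 ≤ ι / β := le_of_lt (div_pos hι hβ)
  have hlow : (n : ℝ) < ι / β :=
    lt_of_le_of_ne (Nat.floor_le hdivpos) (fun h => hnotint n (by exact_mod_cast h.symm))
  have hhigh : ι / β < (n : ℝ) + 1 := Nat.lt_floor_add_one _
  have hmem : ι ∈ Set.Ioo ((n : ℝ) * β) (((n : ℝ) + 1) * β) := by
    constructor
    · rwa [← lt_div_iff₀ hβ]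
    · rwa [← div_lt_iff₀ hβ]
  have hfloor : ∀ t ∈ Set.Ioo ((n : ℝ) * β) (((n : ℝ) + 1) * β), ⌊t / β⌋₊ = n := by
    intro t ht
    have h0 : 0 ≤ t / β :=
      div_nonneg (le_of_lt (lt_of_le_of_lt (mul_nonneg (Nat.cast_nonneg n) hβ.le) ht.1)) hβ.le
    rw [Nat.floor_eq_iff h0]
    exact ⟨(le_div_iff₀ hβ).2 ht.1.le, by push_cast; exact (div_lt_iff₀ hβ).2 ht.2⟩
  have hnhds : Set.Ioo ((n : ℝ) * β) (((n : ℝ) + 1) * β) ∈ nhds ι :=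
    Ioo_mem_nhds hmem.1 hmem.2
  have hpsi_eq : psi γ β =ᶠ[nhds ι]
      fun t => ∑ i ∈ Finset.range (n + 1), (1 / γ) * Rres i (γ * (t - (i : ℝ) * β)) := by
    filter_upwards [hnhds] with t ht
    rw [psi, hfloor t ht]
  have hw_eq : wfun α β γ ν Δ =ᶠ[nhds ι]
      fun t => ∑ i ∈ Finset.range (n + 1),
        (ν ^ i / (Δ + ν) ^ (i + 1)) * Rres i ((α + γ) * (t - (i : ℝ) * β)) := by
    filter_upwards [hnhds] with t ht
    rw [wfun, hfloor t ht]
  have hpsiD : HasDerivAt (fun t => ∑ i ∈ Finset.range (n + 1),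
        (1 / γ) * Rres i (γ * (t - (i : ℝ) * β)))
      (∑ i ∈ Finset.range (n + 1), (1 / γ) *
        ((γ * (ι - (i : ℝ) * β)) ^ i / (Nat.factorial i : ℝ)
          * Real.exp (-(γ * (ι - (i : ℝ) * β))) * (γ * 1))) ι :=
    HasDerivAt.fun_sum fun i _ => (hasDerivAt_Rres_comp i γ ((i : ℝ) * β) ι).const_mul _
  have hwD : HasDerivAt (fun t => ∑ i ∈ Finset.range (n + 1),
        (ν ^ i / (Δ + ν) ^ (i + 1)) * Rres i ((α + γ) * (t - (i : ℝ) * β)))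
      (∑ i ∈ Finset.range (n + 1), (ν ^ i / (Δ + ν) ^ (i + 1)) *
        (((α + γ) * (ι - (i : ℝ) * β)) ^ i / (Nat.factorial i : ℝ)
          * Real.exp (-((α + γ) * (ι - (i : ℝ) * β))) * ((α + γ) * 1))) ι :=
    HasDerivAt.fun_sum fun i _ => (hasDerivAt_Rres_comp i (α + γ) ((i : ℝ) * β) ι).const_mul _
  have hpsi : HasDerivAt (psi γ β) _ ι := hpsiD.congr_of_eventuallyEq hpsi_eq
  have hw : HasDerivAt (wfun α β γ ν Δ) _ ι := hwD.congr_of_eventuallyEq hw_eq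
  refine ⟨hpsi.differentiableAt, hw.differentiableAt, ?_⟩
  rw [hpsi.deriv, hw.deriv, Finset.mul_sum]
  refine Finset.sum_congr rfl fun i _ => ?_
  rw [← hrates, hnu]
  set s := ι - (i : ℝ) * β with hs
  have hfact : (Nat.factorial i : ℝ) ≠ 0 := Nat.cast_ne_zero.2 (Nat.factorial_ne_zero i)
  have hag : α + γ ≠ 0 := by positivity
  have hγ' : γ ≠ 0 := ne_of_gt hγ
  have hkey : Real.exp (-(α * β)) ^ i * Real.exp (-((α + γ) * s)) =
      Real.exp (-(α * ι)) * Real.exp (-(γ * s)) := by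
    rw [← Real.exp_nat_mul, ← Real.exp_add, ← Real.exp_add]
    congr 1
    rw [hs]; ring
  rw [mul_pow, mul_pow, mul_pow]
  calc γ ^ i * Real.exp (-(α * β)) ^ i / (α + γ) ^ (i + 1) *
        ((α + γ) ^ i * s ^ i / (Nat.factorial i : ℝ) * Real.exp (-((α + γ) * s)) * ((α + γ) * 1))
      = (γ ^ i * s ^ i / (Nat.factorial i : ℝ)) *
        (Real.exp (-(α * β)) ^ i * Real.exp (-((α + γ) * s))) := by
        rw [pow_succ]
        field_simp
    _ = (γ ^ i * s ^ i / (Nat.factorial i : ℝ)) *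
        (Real.exp (-(α * ι)) * Real.exp (-(γ * s))) := by rw [hkey]
    _ = Real.exp (-(α * ι)) *
        (1 / γ * (γ ^ i * s ^ i / (Nat.factorial i : ℝ) * Real.exp (-(γ * s)) * (γ * 1))) := by
        field_simp
end
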